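/- Let K be a d×d matrix with entries in a commutative ring A, and define the star product of smooth functions f, g on ℝ^d (with a formal parameter ℏ) by f ⋆_K g = Σ_{n≥0} (ℏ^n/n!) Σ_{i₁,…,iₙ,j₁,…,jₙ} K_{i₁j₁}⋯K_{iₙjₙ} ∂_{i₁}⋯∂_{iₙ}f · ∂_{j₁}⋯∂_{jₙ}g, as a formal power series in ℏ. Then this star product is associative: (f ⋆_K g) ⋆_K h = f ⋆_K (g ⋆_K h). -/

import Mathlib

/- Statement 0: the star product generated by a propagator matrix `K`,
`f ⋆_K g = Σ_n (ℏ^n/n!) 𝒦^n (f ⊗ g)|_{y=x}` with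
`𝒦 = Σ_{ij} K_{ij} ∂_{x_i} ⊗ ∂_{y_j}`, is associative.
Functions are modelled by polynomials over a commutative ℚ-algebra `R`
containing the formal parameter `ℏ` and the entries of `K`. -/

open MvPolynomial

noncomputable section

variable {R : Type} [CommRing R] [Algebra ℚ R]

/-- embedding of `f(x)` into the slot `k` of a two-slot polynomial algebra
(slot `0` = the `x`-variables, slot `1` = the `y`-variables). -/
def emb {d : ℕ} (k : Fin 2) (f : MvPolynomial (Fin d) R) :
    MvPolynomial (Fin 2 × Fin d) R :=
  rename (fun i => (k, i)) f

/-- the bi-differential operator `𝒦 = Σ_{ij} K_{ij} ∂_{x_i} ⊗ ∂_{y_j}`. -/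
def biOp {d : ℕ} (K : Fin d → Fin d → R) :
    Module.End R (MvPolynomial (Fin 2 × Fin d) R) :=
  ∑ i : Fin d, ∑ j : Fin d,
    K i j • ((pderiv ((0 : Fin 2), i)).toLinearMap ∘ₗ (pderiv ((1 : Fin 2), j)).toLinearMap)

/-- the star product `f ⋆_K g = Σ_{n≥0} (ℏ^n/n!) Σ K_{i₁j₁}⋯K_{iₙjₙ}
∂_{i₁}⋯∂_{iₙ} f ⋅ ∂_{j₁}⋯∂_{jₙ} g`, i.e. `exp{ℏ𝒦}(f ⊗ g)` followed by
identifying `y = x` (the map `rename Prod.snd`). -/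
def starK {d : ℕ} (ℏ : R) (K : Fin d → Fin d → R)
    (f g : MvPolynomial (Fin d) R) : MvPolynomial (Fin d) R :=
  rename Prod.snd
    (finsum fun n : ℕ =>
      (n.factorial : ℚ)⁻¹ • (ℏ ^ n • ((biOp K ^ n) (emb 0 f * emb 1 g))))

/-! ### Auxiliary machinery for the associativity proof -/

section Aux

set_option linter.unusedSectionVars false

variable {σ τ : Type}

/-! #### commutation of partial derivatives -/

lemma skaux_pderiv_pderiv_comm (i j : σ) (p : MvPolynomial σ R) :
    pderiv i (pderiv j p) = pderiv j (pderiv i p) := by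
  classical
  induction p using MvPolynomial.induction_on' with
  | add p q hp hq => simp [hp, hq]
  | monomial s a =>
    simp only [pderiv_monomial]
    by_cases hij : i = j
    · subst hij; rfl
    · have h1 := Finsupp.tsub_apply s (Finsupp.single j 1) i
      rw [Finsupp.single_eq_of_ne hij, Nat.sub_zero] at h1
      have h2 := Finsupp.tsub_apply s (Finsupp.single i 1) j
      rw [Finsupp.single_eq_of_ne (Ne.symm hij), Nat.sub_zero] at h2
      rw [h1, h2]
      rw [tsub_right_comm]
      congr 1
      ring

/-! #### degree-lowering operators -/

lemma skaux_sum_sub_single_lt (v : σ →₀ ℕ) (i : σ) (h : v i ≠ 0) :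
    ((v - Finsupp.single i 1).sum fun _ e => e) < v.sum fun _ e => e := by
  classical
  have hv : v = (v - Finsupp.single i 1) + Finsupp.single i 1 := by
    ext k
    simp only [Finsupp.add_apply, Finsupp.tsub_apply, Finsupp.single_apply]
    split_ifs with hk
    · subst hk; omega
    · omega
  conv_rhs => rw [hv]
  rw [Finsupp.sum_add_index' (by simp) (fun _ _ _ => rfl)]
  rw [Finsupp.sum_single_index (by rfl)]
  omega

lemma skaux_pderiv_lowers (i : σ) (p : MvPolynomial σ R) :
    pderiv i p = 0 ∨ (pderiv i p).totalDegree < p.totalDegree := by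
  classical
  by_cases h : pderiv i p = 0
  · exact Or.inl h
  right
  have hex : ∃ v ∈ p.support, v i ≠ 0 := by
    by_contra hc
    push_neg at hc
    apply h
    conv_lhs => rw [p.as_sum]
    rw [map_sum]
    refine Finset.sum_eq_zero fun v hv => ?_
    rw [pderiv_monomial, hc v hv, Nat.cast_zero, mul_zero, map_zero]
  obtain ⟨v0, hv0, hv0i⟩ := hex
  have hdeg1 : 1 ≤ p.totalDegree := by
    have h1 : v0 i ≤ v0.sum fun _ e => e :=
      Finset.single_le_sum (f := fun a => v0 a) (fun a _ => Nat.zero_le _)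
        (Finsupp.mem_support_iff.2 hv0i)
    have h2 := le_totalDegree hv0
    omega
  have hle : (pderiv i p).totalDegree ≤ p.totalDegree - 1 := by
    conv_lhs => rw [p.as_sum, map_sum]
    refine totalDegree_finsetSum_le fun v hv => ?_
    rw [pderiv_monomial]
    by_cases hvi : v i = 0
    · rw [hvi]; simp
    · refine (totalDegree_monomial_le _ _).trans ?_
      have hid : ((v - Finsupp.single i 1).sum fun _ => id)
          = ((v - Finsupp.single i 1).sum fun _ e => e) := rfl
      have h3 := skaux_sum_sub_single_lt v i hvi
      have h4 := le_totalDegree hv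
      omega
  omega

/-- an endomorphism that strictly lowers total degree (or annihilates). -/
def SkLowers (T : Module.End R (MvPolynomial σ R)) : Prop :=
  ∀ p, T p = 0 ∨ (T p).totalDegree < p.totalDegree

lemma SkLowers.add {T S : Module.End R (MvPolynomial σ R)} (hT : SkLowers T)
    (hS : SkLowers S) : SkLowers (T + S) := by
  intro p
  rcases hT p with h1 | h1 <;> rcases hS p with h2 | h2
  · left; simp [LinearMap.add_apply, h1, h2]
  · right; simpa [LinearMap.add_apply, h1] using h2
  · right; simpa [LinearMap.add_apply, h2] using h1
  · right
    exact lt_of_le_of_lt (totalDegree_add _ _) (max_lt h1 h2)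

lemma SkLowers.smul {T : Module.End R (MvPolynomial σ R)} (c : R) (hT : SkLowers T) :
    SkLowers (c • T) := by
  intro p
  rcases hT p with h | h
  · left; simp [h]
  · right; exact lt_of_le_of_lt (totalDegree_smul_le c (T p)) h

lemma SkLowers.comp {T S : Module.End R (MvPolynomial σ R)} (hT : SkLowers T)
    (hS : SkLowers S) : SkLowers (T * S) := by
  intro p
  rcases hS p with h | h
  · left; simp [Module.End.mul_apply, h]
  · rcases hT (S p) with h2 | h2
    · left; simp [Module.End.mul_apply, h2]
    · right; exact lt_trans (by simpa [Module.End.mul_apply] using h2) h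

lemma SkLowers.sum {ι : Type*} (s : Finset ι) (T : ι → Module.End R (MvPolynomial σ R))
    (hT : ∀ i ∈ s, SkLowers (T i)) : SkLowers (∑ i ∈ s, T i) := by
  classical
  induction s using Finset.induction_on with
  | empty => intro p; left; simp
  | insert _ _ hx ih =>
    rw [Finset.sum_insert hx]
    exact (hT _ (Finset.mem_insert_self _ _)).add
      (ih fun i hi => hT i (Finset.mem_insert_of_mem hi))

lemma SkLowers.pow_deg {T : Module.End R (MvPolynomial σ R)} (hT : SkLowers T) :
    ∀ (n : ℕ) (p), (T ^ n) p = 0 ∨ ((T ^ n) p).totalDegree + n ≤ p.totalDegree := by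
  intro n
  induction n with
  | zero => intro p; right; simp
  | succ n ih =>
    intro p
    rw [pow_succ, Module.End.mul_apply]
    rcases hT p with h | h
    · left; simp [h]
    · rcases ih (T p) with h2 | h2
      · left; exact h2
      · right; omega

lemma SkLowers.pow_eq_zero {T : Module.End R (MvPolynomial σ R)} (hT : SkLowers T)
    {n : ℕ} {p} (h : p.totalDegree < n) : (T ^ n) p = 0 := by
  rcases hT.pow_deg n p with h2 | h2
  · exact h2
  · omega

/-! #### the formal exponential of a locally nilpotent operator -/

/-- `exp (ℏ T)` applied to `p`, as a `finsum`. -/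
def skExp (ℏ : R) (T : Module.End R (MvPolynomial σ R))
    (p : MvPolynomial σ R) : MvPolynomial σ R :=
  finsum fun n : ℕ => (n.factorial : ℚ)⁻¹ • (ℏ ^ n • ((T ^ n) p))

lemma skExp_eq_sum {T : Module.End R (MvPolynomial σ R)} (hT : SkLowers T) (ℏ : R)
    (p : MvPolynomial σ R) {N : ℕ} (hN : p.totalDegree < N) :
    skExp ℏ T p = ∑ n ∈ Finset.range N, (n.factorial : ℚ)⁻¹ • (ℏ ^ n • ((T ^ n) p)) := by
  apply finsum_eq_finset_sum_of_support_subset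
  intro n hn
  simp only [Function.mem_support, Ne] at hn
  simp only [Finset.coe_range, Set.mem_Iio]
  by_contra hnot
  push_neg at hnot
  exact hn (by rw [hT.pow_eq_zero (lt_of_lt_of_le hN hnot), smul_zero, smul_zero])

lemma skaux_map_qsmul (L : MvPolynomial σ R →ₗ[R] MvPolynomial τ R) (q : ℚ)
    (x : MvPolynomial σ R) : L (q • x) = q • L x := by
  rw [← algebraMap_smul R q x, map_smul, algebraMap_smul]

lemma skaux_pow_intertwine (L : MvPolynomial σ R →ₗ[R] MvPolynomial τ R)
    {A : Module.End R (MvPolynomial σ R)} {B : Module.End R (MvPolynomial τ R)}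
    (hAB : ∀ q, L (A q) = B (L q)) (n : ℕ) (p : MvPolynomial σ R) :
    L ((A ^ n) p) = (B ^ n) (L p) := by
  induction n generalizing p with
  | zero => simp
  | succ n ih =>
    rw [pow_succ, pow_succ, Module.End.mul_apply, Module.End.mul_apply, ih (A p), hAB]

lemma skExp_naturality (ℏ : R) (L : MvPolynomial σ R →ₗ[R] MvPolynomial τ R)
    {A : Module.End R (MvPolynomial σ R)} {B : Module.End R (MvPolynomial τ R)}
    (hA : SkLowers A) (hAB : ∀ q, L (A q) = B (L q)) (p : MvPolynomial σ R) :
    L (skExp ℏ A p) = skExp ℏ B (L p) := by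
  rw [skExp_eq_sum hA ℏ p (Nat.lt_succ_self _), map_sum]
  have hRHS : skExp ℏ B (L p) = ∑ n ∈ Finset.range (p.totalDegree + 1),
      (n.factorial : ℚ)⁻¹ • (ℏ ^ n • ((B ^ n) (L p))) := by
    apply finsum_eq_finset_sum_of_support_subset
    intro n hn
    simp only [Function.mem_support, Ne] at hn
    simp only [Finset.coe_range, Set.mem_Iio]
    by_contra hnot
    push_neg at hnot
    refine hn ?_
    rw [← skaux_pow_intertwine L hAB, hA.pow_eq_zero (Nat.lt_of_succ_le hnot), map_zero,
      smul_zero, smul_zero]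
  rw [hRHS]
  refine Finset.sum_congr rfl fun n _ => ?_
  rw [skaux_map_qsmul, map_smul, skaux_pow_intertwine L hAB]

lemma skExp_add (ℏ : R) {A B : Module.End R (MvPolynomial σ R)} (hA : SkLowers A)
    (hB : SkLowers B) (hAB : Commute A B) (p : MvPolynomial σ R) :
    skExp ℏ A (skExp ℏ B p) = skExp ℏ (A + B) p := by
  classical
  set N := p.totalDegree + 1 with hNdef
  have hN : p.totalDegree < N := Nat.lt_succ_self _
  set g : ℕ × ℕ → MvPolynomial σ R := fun ab =>
    ((ab.1.factorial : ℚ)⁻¹ * (ab.2.factorial : ℚ)⁻¹) •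
      (ℏ ^ (ab.1 + ab.2) • ((A ^ ab.1) ((B ^ ab.2) p))) with hg
  have hgvan : ∀ a b : ℕ, N ≤ a + b → g (a, b) = 0 := by
    intro a b hab
    have : (A ^ a) ((B ^ b) p) = 0 := by
      rcases hB.pow_deg b p with h | h
      · rw [h, map_zero]
      · exact hA.pow_eq_zero (by omega)
    simp only [hg, this, smul_zero]
  have hdeg_inner : (∑ b ∈ Finset.range N,
      (b.factorial : ℚ)⁻¹ • (ℏ ^ b • ((B ^ b) p))).totalDegree < N := by
    refine lt_of_le_of_lt (totalDegree_finsetSum_le fun b _ => ?_) hN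
    refine (totalDegree_smul_le _ _).trans ?_
    refine (totalDegree_smul_le _ _).trans ?_
    rcases hB.pow_deg b p with h | h
    · rw [h]; exact Nat.zero_le _
    · omega
  rw [skExp_eq_sum hB ℏ p hN, skExp_eq_sum hA ℏ _ hdeg_inner]
  have hLHS : ∀ a ∈ Finset.range N,
      (a.factorial : ℚ)⁻¹ • (ℏ ^ a • ((A ^ a)
        (∑ b ∈ Finset.range N, (b.factorial : ℚ)⁻¹ • (ℏ ^ b • ((B ^ b) p)))))
      = ∑ b ∈ Finset.range N, g (a, b) := by
    intro a _
    rw [map_sum, Finset.smul_sum, Finset.smul_sum]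
    refine Finset.sum_congr rfl fun b _ => ?_
    rw [skaux_map_qsmul (A ^ a : Module.End R (MvPolynomial σ R)), map_smul]
    rw [hg]
    simp only
    rw [pow_add, mul_smul, mul_smul]
    rw [smul_comm (ℏ ^ a) ((b.factorial : ℚ)⁻¹)]
  rw [Finset.sum_congr rfl hLHS]
  rw [skExp_eq_sum (hA.add hB) ℏ p hN]
  have hterm : ∀ n ∈ Finset.range N,
      (n.factorial : ℚ)⁻¹ • (ℏ ^ n • (((A + B) ^ n) p))
      = ∑ k ∈ Finset.range (n + 1), g (k, n - k) := by
    intro n _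
    rw [hAB.add_pow]
    rw [LinearMap.sum_apply, Finset.smul_sum, Finset.smul_sum]
    refine Finset.sum_congr rfl fun k hk => ?_
    have hkn : k ≤ n := Nat.lt_succ_iff.mp (Finset.mem_range.mp hk)
    rw [Module.End.mul_apply, Module.End.mul_apply, Module.End.natCast_apply]
    rw [map_nsmul, map_nsmul]
    rw [hg]
    simp only
    have hadd : k + (n - k) = n := Nat.add_sub_cancel' hkn
    rw [hadd]
    rw [← Nat.cast_smul_eq_nsmul ℚ (n.choose k)]
    rw [smul_comm (ℏ ^ n) ((n.choose k : ℚ))]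
    rw [smul_smul]
    congr 1
    have hfac : (n.choose k : ℚ) * (k.factorial : ℚ) * ((n - k).factorial : ℚ)
        = (n.factorial : ℚ) := by
      rw [← Nat.cast_mul, ← Nat.cast_mul, Nat.choose_mul_factorial_mul_factorial hkn]
    have h1 : (n.factorial : ℚ) ≠ 0 := Nat.cast_ne_zero.mpr n.factorial_ne_zero
    have h2 : (k.factorial : ℚ) ≠ 0 := Nat.cast_ne_zero.mpr k.factorial_ne_zero
    have h3 : ((n - k).factorial : ℚ) ≠ 0 := Nat.cast_ne_zero.mpr (n - k).factorial_ne_zero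
    field_simp
    linarith [hfac]
  rw [Finset.sum_congr rfl hterm]
  have htri : ∀ n ∈ Finset.range N, ∑ k ∈ Finset.range (n + 1), g (k, n - k)
      = ∑ ij ∈ Finset.HasAntidiagonal.antidiagonal n, g ij := by
    intro n _
    rw [Finset.Nat.sum_antidiagonal_eq_sum_range_succ_mk]
  rw [Finset.sum_congr rfl htri]
  rw [← Finset.sum_biUnion (by
    intro x _ y _ hxy
    simp only [Function.onFun]
    refine Finset.disjoint_left.2 fun a ha ha' => hxy ?_
    rw [Finset.HasAntidiagonal.mem_antidiagonal] at ha ha'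
    omega)]
  rw [← Finset.sum_product']
  symm
  apply Finset.sum_subset
  · intro x hx
    simp only [Finset.mem_biUnion, Finset.HasAntidiagonal.mem_antidiagonal, Finset.mem_range] at hx
    obtain ⟨n, hn, hsum⟩ := hx
    rw [Finset.mem_product]
    simp only [Finset.mem_range]
    omega
  · intro x hx hnx
    simp only [Finset.mem_product, Finset.mem_range] at hx
    simp only [Finset.mem_biUnion, Finset.HasAntidiagonal.mem_antidiagonal, Finset.mem_range] at hnx
    push_neg at hnx
    rcases le_or_gt N (x.1 + x.2) with h | h
    · have := hgvan x.1 x.2 h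
      simpa using this
    · exact absurd rfl (hnx (x.1 + x.2) (by omega))

/-! #### the chain rule for `pderiv` under `rename` -/

lemma skaux_pderiv_rename_sum {α β : Type} [Fintype α] [DecidableEq α] [DecidableEq β]
    (σf : α → β) (j : β) (p : MvPolynomial α R) :
    pderiv j (rename σf p) =
      ∑ i ∈ Finset.univ.filter (fun i => σf i = j), rename σf (pderiv i p) := by
  induction p using MvPolynomial.induction_on with
  | C a => simp
  | add p q hp hq => simp [hp, hq, Finset.sum_add_distrib]
  | mul_X p i hp =>
    rw [map_mul, rename_X]
    rw [pderiv_mul]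
    rw [hp]
    have hXr : ∀ k : α, rename σf (pderiv k (p * X i)) =
        rename σf (pderiv k p) * X (σf i) + rename σf (p * pderiv k (X i)) := by
      intro k
      rw [pderiv_mul, map_add, map_mul, rename_X]
    rw [Finset.sum_congr rfl fun k _ => hXr k, Finset.sum_add_distrib]
    rw [← Finset.sum_mul]
    congr 1
    by_cases hij : σf i = j
    · rw [Finset.sum_eq_single i]
      · simp [hij]
      · intro k hk hki
        rw [pderiv_X_of_ne (Ne.symm hki)]
        simp
      · intro hni
        exact absurd (Finset.mem_filter.mpr ⟨Finset.mem_univ i, hij⟩) hni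
    · rw [pderiv_X_of_ne hij]
      rw [mul_zero]
      symm
      refine Finset.sum_eq_zero fun k hk => ?_
      have hki : i ≠ k := by
        rintro rfl
        exact hij (Finset.mem_filter.mp hk).2
      rw [pderiv_X_of_ne hki]
      simp

/-- a "slot map" acting on the slot coordinate of a two-coordinate variable set. -/
def skSlot {m n : ℕ} (t : Fin m → Fin n) (d : ℕ) :
    Fin m × Fin d → Fin n × Fin d := fun v => (t v.1, v.2)

lemma skaux_pderiv_slot {d m n : ℕ} (t : Fin m → Fin n) (k : Fin n) (i : Fin d)
    (p : MvPolynomial (Fin m × Fin d) R) :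
    pderiv (k, i) (rename (skSlot t d) p) =
      ∑ a ∈ Finset.univ.filter (fun a => t a = k),
        rename (skSlot t d) (pderiv (a, i) p) := by
  rw [skaux_pderiv_rename_sum]
  rw [Finset.sum_filter, Finset.sum_filter, Fintype.sum_prod_type]
  refine Finset.sum_congr rfl fun a _ => ?_
  by_cases h : t a = k
  · simp only [skSlot, h, Prod.mk.injEq, true_and, if_true]
    rw [Finset.sum_ite_eq' Finset.univ i]
    simp
  · simp [skSlot, h, Prod.mk.injEq]

lemma skSlot_inj {m n d : ℕ} {t : Fin m → Fin n} (ht : Function.Injective t) :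
    Function.Injective (skSlot t d) := by
  rintro ⟨a, i⟩ ⟨b, j⟩ hh
  simp only [skSlot, Prod.mk.injEq] at hh ⊢
  exact ⟨ht hh.1, hh.2⟩

/-! #### the generic bidifferential operator -/

variable {d : ℕ}

/-- generic bidifferential operator. -/
def skBi {m : Type} (K : Fin d → Fin d → R) (u v : Fin d → m) :
    Module.End R (MvPolynomial m R) :=
  ∑ i : Fin d, ∑ j : Fin d,
    K i j • ((pderiv (u i)).toLinearMap ∘ₗ (pderiv (v j)).toLinearMap)

lemma biOp_eq_skBi (K : Fin d → Fin d → R) :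
    biOp K = skBi K (fun i => ((0 : Fin 2), i)) (fun j => ((1 : Fin 2), j)) := rfl

lemma skBi_congr {m : Type} (K : Fin d → Fin d → R) {u v u' v' : Fin d → m}
    (hu : ∀ i, u i = u' i) (hv : ∀ j, v j = v' j) : skBi K u v = skBi K u' v' := by
  have hu' : u = u' := funext hu
  have hv' : v = v' := funext hv
  rw [hu', hv']

lemma skBi_apply {m : Type} (K : Fin d → Fin d → R) (u v : Fin d → m)
    (q : MvPolynomial m R) :
    skBi K u v q = ∑ i : Fin d, ∑ j : Fin d,
      K i j • pderiv (u i) (pderiv (v j) q) := by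
  simp [skBi, LinearMap.sum_apply, LinearMap.smul_apply]

lemma skLowers_pderiv (x : σ) :
    SkLowers ((pderiv x).toLinearMap : Module.End R (MvPolynomial σ R)) := fun p =>
  skaux_pderiv_lowers x p

lemma skLowers_skBi {m : Type} (K : Fin d → Fin d → R) (u v : Fin d → m) :
    SkLowers (skBi K u v) := by
  refine SkLowers.sum _ _ fun i _ => SkLowers.sum _ _ fun j _ => ?_
  exact SkLowers.smul _ ((skLowers_pderiv (u i)).comp (skLowers_pderiv (v j)))

lemma skCommute_pderiv (x y : σ) :
    Commute ((pderiv x).toLinearMap : Module.End R (MvPolynomial σ R))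
      (pderiv y).toLinearMap := by
  apply LinearMap.ext
  intro p
  exact skaux_pderiv_pderiv_comm x y p

lemma skCommute_skBi {m : Type} (K : Fin d → Fin d → R) (u v w z : Fin d → m) :
    Commute (skBi K u v) (skBi K w z) := by
  refine Commute.sum_left _ _ _ fun i _ => Commute.sum_left _ _ _ fun j _ => ?_
  refine Commute.sum_right _ _ _ fun i' _ => Commute.sum_right _ _ _ fun j' _ => ?_
  have h1 := skCommute_pderiv (R := R) (σ := m) (u i) (w i')
  have h2 := skCommute_pderiv (R := R) (σ := m) (u i) (z j')
  have h3 := skCommute_pderiv (R := R) (σ := m) (v j) (w i')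
  have h4 := skCommute_pderiv (R := R) (σ := m) (v j) (z j')
  have hcore : Commute
      ((pderiv (u i)).toLinearMap * (pderiv (v j)).toLinearMap :
        Module.End R (MvPolynomial m R))
      ((pderiv (w i')).toLinearMap * (pderiv (z j')).toLinearMap) :=
    (h1.mul_right h2).mul_left (h3.mul_right h4)
  exact (hcore.smul_left (K i j)).smul_right (K i' j')

lemma skBi_rename {m m' : Type} (K : Fin d → Fin d → R) (f : m → m')
    (hf : Function.Injective f) (u v : Fin d → m) (q : MvPolynomial m R) :
    rename f (skBi K u v q) = skBi K (fun i => f (u i)) (fun j => f (v j)) (rename f q) := by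
  rw [skBi_apply, skBi_apply, map_sum]
  refine Finset.sum_congr rfl fun i _ => ?_
  rw [map_sum]
  refine Finset.sum_congr rfl fun j _ => ?_
  rw [map_smul, pderiv_rename hf, pderiv_rename hf]

end Aux

/-! #### the three-slot reduction -/

section Main

variable {d : ℕ}

/-- merge slots (0,1) of three slots into slot 0 of two slots. -/
def skML : Fin 3 → Fin 2 := ![0, 0, 1]

/-- merge slots (1,2) of three slots into slot 1 of two slots. -/
def skMR : Fin 3 → Fin 2 := ![0, 1, 1]

/-- embed two slots as slots (0,1) of three slots. -/
def skTL : Fin 2 → Fin 3 := ![0, 1]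

/-- embed two slots as slots (1,2) of three slots. -/
def skTR : Fin 2 → Fin 3 := ![1, 2]

/-- three-slot embedding of a polynomial. -/
def skEmb (k : Fin 3) (f : MvPolynomial (Fin d) R) : MvPolynomial (Fin 3 × Fin d) R :=
  rename (fun i => (k, i)) f

lemma skaux_pderiv_ml_0 (i : Fin d) (q : MvPolynomial (Fin 3 × Fin d) R) :
    pderiv ((0 : Fin 2), i) (rename (skSlot skML d) q)
      = rename (skSlot skML d) (pderiv ((0 : Fin 3), i) q)
        + rename (skSlot skML d) (pderiv ((1 : Fin 3), i) q) := by
  rw [skaux_pderiv_slot]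
  rw [show (Finset.univ.filter (fun a : Fin 3 => skML a = 0)) = {0, 1} from by decide]
  rw [Finset.sum_insert (by decide), Finset.sum_singleton]

lemma skaux_pderiv_ml_1 (j : Fin d) (q : MvPolynomial (Fin 3 × Fin d) R) :
    pderiv ((1 : Fin 2), j) (rename (skSlot skML d) q)
      = rename (skSlot skML d) (pderiv ((2 : Fin 3), j) q) := by
  rw [skaux_pderiv_slot]
  rw [show (Finset.univ.filter (fun a : Fin 3 => skML a = 1)) = {2} from by decide]
  rw [Finset.sum_singleton]

lemma skaux_pderiv_mr_0 (i : Fin d) (q : MvPolynomial (Fin 3 × Fin d) R) :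
    pderiv ((0 : Fin 2), i) (rename (skSlot skMR d) q)
      = rename (skSlot skMR d) (pderiv ((0 : Fin 3), i) q) := by
  rw [skaux_pderiv_slot]
  rw [show (Finset.univ.filter (fun a : Fin 3 => skMR a = 0)) = {0} from by decide]
  rw [Finset.sum_singleton]

lemma skaux_pderiv_mr_1 (j : Fin d) (q : MvPolynomial (Fin 3 × Fin d) R) :
    pderiv ((1 : Fin 2), j) (rename (skSlot skMR d) q)
      = rename (skSlot skMR d) (pderiv ((1 : Fin 3), j) q)
        + rename (skSlot skMR d) (pderiv ((2 : Fin 3), j) q) := by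
  rw [skaux_pderiv_slot]
  rw [show (Finset.univ.filter (fun a : Fin 3 => skMR a = 1)) = {1, 2} from by decide]
  rw [Finset.sum_insert (by decide), Finset.sum_singleton]

/-- three-slot bidifferential operator acting on slots `a`, `b`. -/
def skD (K : Fin d → Fin d → R) (a b : Fin 3) :
    Module.End R (MvPolynomial (Fin 3 × Fin d) R) :=
  skBi K (fun i => (a, i)) (fun j => (b, j))

lemma skaux_merge_ml (K : Fin d → Fin d → R) (q : MvPolynomial (Fin 3 × Fin d) R) :
    rename (skSlot skML d) ((skD K 0 2 + skD K 1 2) q)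
      = biOp K (rename (skSlot skML d) q) := by
  rw [biOp_eq_skBi, skBi_apply]
  rw [LinearMap.add_apply]
  simp only [skD, skBi_apply, map_add, map_sum, map_smul]
  rw [← Finset.sum_add_distrib]
  refine Finset.sum_congr rfl fun i _ => ?_
  rw [← Finset.sum_add_distrib]
  refine Finset.sum_congr rfl fun j _ => ?_
  rw [skaux_pderiv_ml_1, skaux_pderiv_ml_0, smul_add]

lemma skaux_merge_mr (K : Fin d → Fin d → R) (q : MvPolynomial (Fin 3 × Fin d) R) :
    rename (skSlot skMR d) ((skD K 0 1 + skD K 0 2) q)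
      = biOp K (rename (skSlot skMR d) q) := by
  rw [biOp_eq_skBi, skBi_apply]
  rw [LinearMap.add_apply]
  simp only [skD, skBi_apply, map_add, map_sum, map_smul]
  rw [← Finset.sum_add_distrib]
  refine Finset.sum_congr rfl fun i _ => ?_
  rw [← Finset.sum_add_distrib]
  refine Finset.sum_congr rfl fun j _ => ?_
  rw [skaux_pderiv_mr_1]
  simp only [map_add, skaux_pderiv_mr_0, smul_add]

lemma skaux_pderiv_emb_ne (a c : Fin 3) (hac : a ≠ c) (i : Fin d)
    (h : MvPolynomial (Fin d) R) : pderiv (a, i) (skEmb c h) = 0 := by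
  apply pderiv_eq_zero_of_notMem_vars
  intro hmem
  have := vars_rename (fun i => (c, i)) h hmem
  simp only [Finset.mem_image] at this
  obtain ⟨x, _, hx⟩ := this
  injection hx with h1 h2
  exact hac h1.symm

lemma skaux_skD_mul_right (K : Fin d → Fin d → R) (a b c : Fin 3) (hac : a ≠ c)
    (hbc : b ≠ c) (h : MvPolynomial (Fin d) R) (q : MvPolynomial (Fin 3 × Fin d) R) :
    skD K a b (q * skEmb c h) = skD K a b q * skEmb c h := by
  rw [skD, skBi_apply, skBi_apply, Finset.sum_mul]
  refine Finset.sum_congr rfl fun i _ => ?_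
  rw [Finset.sum_mul]
  refine Finset.sum_congr rfl fun j _ => ?_
  rw [smul_mul_assoc]
  congr 1
  rw [pderiv_mul, skaux_pderiv_emb_ne b c hbc, mul_zero, add_zero]
  rw [pderiv_mul, skaux_pderiv_emb_ne a c hac, mul_zero, add_zero]

lemma skaux_skD_mul_left (K : Fin d → Fin d → R) (a b c : Fin 3) (hac : c ≠ a)
    (hbc : c ≠ b) (f : MvPolynomial (Fin d) R) (q : MvPolynomial (Fin 3 × Fin d) R) :
    skD K a b (skEmb c f * q) = skEmb c f * skD K a b q := by
  rw [mul_comm, skaux_skD_mul_right K a b c (Ne.symm hac) (Ne.symm hbc), mul_comm]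

/-- `starK` in terms of `skExp`. -/
lemma starK_eq (ℏ : R) (K : Fin d → Fin d → R) (f g : MvPolynomial (Fin d) R) :
    starK ℏ K f g = rename Prod.snd (skExp ℏ (biOp K) (emb 0 f * emb 1 g)) := rfl

/-! #### naturality wrappers -/

lemma skExp_rename_nat (ℏ : R) {σ' τ' : Type} (gmap : σ' → τ')
    {A : Module.End R (MvPolynomial σ' R)} {B : Module.End R (MvPolynomial τ' R)}
    (hA : SkLowers A) (hAB : ∀ q, rename gmap (A q) = B (rename gmap q))
    (p : MvPolynomial σ' R) :
    rename gmap (skExp ℏ A p) = skExp ℏ B (rename gmap p) := by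
  have := skExp_naturality ℏ (rename gmap).toLinearMap hA (fun q => by simpa using hAB q) p
  simpa using this

lemma skExp_mulRight_nat (ℏ : R) {σ' : Type} {A : Module.End R (MvPolynomial σ' R)}
    (hA : SkLowers A) (H' : MvPolynomial σ' R)
    (hAB : ∀ q, A (q * H') = A q * H') (p : MvPolynomial σ' R) :
    skExp ℏ A p * H' = skExp ℏ A (p * H') := by
  have := skExp_naturality ℏ (LinearMap.mulRight R H') hA
    (fun q => by simpa using (hAB q).symm) p
  simpa using this

lemma skExp_mulLeft_nat (ℏ : R) {σ' : Type} {A : Module.End R (MvPolynomial σ' R)}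
    (hA : SkLowers A) (F' : MvPolynomial σ' R)
    (hAB : ∀ q, A (F' * q) = F' * A q) (p : MvPolynomial σ' R) :
    F' * skExp ℏ A p = skExp ℏ A (F' * p) := by
  have := skExp_naturality ℏ (LinearMap.mulLeft R F') hA
    (fun q => by simpa using (hAB q).symm) p
  simpa using this

/-! #### rename bookkeeping -/

lemma skEmb_of_emb2 (t : Fin 2 → Fin 3) (k : Fin 2) (f : MvPolynomial (Fin d) R) :
    rename (skSlot t d) (emb k f) = skEmb (t k) f := by
  rw [emb, skEmb, rename_rename]
  rfl

lemma emb_of_skEmb (m : Fin 3 → Fin 2) (c : Fin 3) (f : MvPolynomial (Fin d) R) :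
    rename (skSlot m d) (skEmb c f) = emb (m c) f := by
  rw [emb, skEmb, rename_rename]
  rfl

lemma emb_rename_snd (k : Fin 2) (t : Fin 2 → Fin 3) (m : Fin 3 → Fin 2)
    (hmt : ∀ a, m (t a) = k) (X : MvPolynomial (Fin 2 × Fin d) R) :
    emb k (rename Prod.snd X) = rename (skSlot m d) (rename (skSlot t d) X) := by
  rw [emb, rename_rename, rename_rename]
  have he : ((fun i => (k, i)) ∘ (Prod.snd : Fin 2 × Fin d → Fin d))
      = skSlot m d ∘ skSlot t d := by
    funext v
    show (k, v.2) = (m (t v.1), v.2)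
    rw [hmt v.1]
  rw [he]

lemma rename_snd_merge (m : Fin 3 → Fin 2) (Y : MvPolynomial (Fin 3 × Fin d) R) :
    rename Prod.snd (rename (skSlot m d) Y) = rename Prod.snd Y := by
  rw [rename_rename]
  rfl

/-! #### naturality of the bidifferential operators -/

lemma nat_TL (K : Fin d → Fin d → R) (q : MvPolynomial (Fin 2 × Fin d) R) :
    rename (skSlot skTL d) (biOp K q) = skD K 0 1 (rename (skSlot skTL d) q) := by
  rw [biOp_eq_skBi,
    skBi_rename K _ (skSlot_inj (show Function.Injective skTL by decide))]
  rw [skD]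
  apply congrFun
  apply congrArg
  apply skBi_congr K
  · intro i
    show (skTL 0, i) = ((0 : Fin 3), i)
    rw [show skTL 0 = 0 from by decide]
  · intro j
    show (skTL 1, j) = ((1 : Fin 3), j)
    rw [show skTL 1 = 1 from by decide]

lemma nat_TR (K : Fin d → Fin d → R) (q : MvPolynomial (Fin 2 × Fin d) R) :
    rename (skSlot skTR d) (biOp K q) = skD K 1 2 (rename (skSlot skTR d) q) := by
  rw [biOp_eq_skBi,
    skBi_rename K _ (skSlot_inj (show Function.Injective skTR by decide))]
  rw [skD]
  apply congrFun
  apply congrArg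
  apply skBi_congr K
  · intro i
    show (skTR 0, i) = ((1 : Fin 3), i)
    rw [show skTR 0 = 1 from by decide]
  · intro j
    show (skTR 1, j) = ((2 : Fin 3), j)
    rw [show skTR 1 = 2 from by decide]

set_option maxHeartbeats 1000000 in
/-- the star product `⋆_K` is associative. -/
theorem starK_assoc {d : ℕ} (ℏ : R) (K : Fin d → Fin d → R)
    (f g h : MvPolynomial (Fin d) R) :
    starK ℏ K (starK ℏ K f g) h = starK ℏ K f (starK ℏ K g h) := by
  classical
  set F := skEmb (R := R) (0 : Fin 3) f with hF
  set G := skEmb (R := R) (1 : Fin 3) g with hG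
  set H := skEmb (R := R) (2 : Fin 3) h with hH
  have lowD : ∀ a b : Fin 3, SkLowers (skD K a b) := fun a b => skLowers_skBi K _ _
  have lowOp : SkLowers (biOp K) := by rw [biOp_eq_skBi]; exact skLowers_skBi K _ _
  have commD : ∀ a b a' b' : Fin 3, Commute (skD K a b) (skD K a' b') := fun a b a' b' =>
    skCommute_skBi K _ _ _ _
  have hL1 : emb (0 : Fin 2) (starK ℏ K f g)
      = rename (skSlot skML d) (skExp ℏ (skD K 0 1) (F * G)) := by
    rw [starK_eq, emb_rename_snd 0 skTL skML (by decide)]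
    rw [skExp_rename_nat ℏ (skSlot skTL d) lowOp (nat_TL K)]
    rw [map_mul, skEmb_of_emb2, skEmb_of_emb2]
    rw [show skTL 0 = 0 from by decide, show skTL 1 = 1 from by decide, ← hF, ← hG]
  have hL2 : emb (1 : Fin 2) h = rename (skSlot skML d) H := by
    rw [hH, emb_of_skEmb skML 2 h]
    rw [show skML 2 = 1 from by decide]
  have hLHS : starK ℏ K (starK ℏ K f g) h
      = rename Prod.snd (skExp ℏ (skD K 0 2 + skD K 1 2) (skExp ℏ (skD K 0 1) (F * G * H))) := by
    rw [starK_eq, hL1, hL2, ← map_mul]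
    rw [skExp_mulRight_nat ℏ (lowD 0 1) H
      (fun q => skaux_skD_mul_right K 0 1 2 (by decide) (by decide) h q)]
    rw [← skExp_rename_nat ℏ (skSlot skML d) ((lowD 0 2).add (lowD 1 2))
      (skaux_merge_ml K)]
    rw [rename_snd_merge]
  have hR1 : emb (1 : Fin 2) (starK ℏ K g h)
      = rename (skSlot skMR d) (skExp ℏ (skD K 1 2) (G * H)) := by
    rw [starK_eq, emb_rename_snd 1 skTR skMR (by decide)]
    rw [skExp_rename_nat ℏ (skSlot skTR d) lowOp (nat_TR K)]
    rw [map_mul, skEmb_of_emb2, skEmb_of_emb2]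
    rw [show skTR 0 = 1 from by decide, show skTR 1 = 2 from by decide, ← hG, ← hH]
  have hR2 : emb (0 : Fin 2) f = rename (skSlot skMR d) F := by
    rw [hF, emb_of_skEmb skMR 0 f]
    rw [show skMR 0 = 0 from by decide]
  have hRHS : starK ℏ K f (starK ℏ K g h)
      = rename Prod.snd (skExp ℏ (skD K 0 1 + skD K 0 2) (skExp ℏ (skD K 1 2) (F * (G * H)))) := by
    rw [starK_eq, hR1, hR2, ← map_mul]
    rw [skExp_mulLeft_nat ℏ (lowD 1 2) F
      (fun q => skaux_skD_mul_left K 1 2 0 (by decide) (by decide) f q)]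
    rw [← skExp_rename_nat ℏ (skSlot skMR d) ((lowD 0 1).add (lowD 0 2))
      (skaux_merge_mr K)]
    rw [rename_snd_merge]
  rw [hLHS, hRHS]
  rw [skExp_add ℏ ((lowD 0 2).add (lowD 1 2)) (lowD 0 1)
    ((commD 0 2 0 1).add_left (commD 1 2 0 1)) (F * G * H)]
  rw [skExp_add ℏ ((lowD 0 1).add (lowD 0 2)) (lowD 1 2)
    ((commD 0 1 1 2).add_left (commD 0 2 1 2)) (F * (G * H))]
  have hop : skD K 0 2 + skD K 1 2 + skD K 0 1 = skD K 0 1 + skD K 0 2 + skD K 1 2 := by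
    abel
  rw [hop, mul_assoc]

end Main

end
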